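/- Let X be a connected, locally finite simple graph and let G be a subgroup of the automorphism group Aut(X) of X such that G has only finitely many orbits of vertices and every vertex stabilizer in G is finite. Then G has finite index in its normalizer within Aut(X). -/

import Mathlib

open SimpleGraph

section Aux

variable {V : Type*} {X : SimpleGraph V}

private lemma aux_dist_le_getVert (hconn : X.Connected) {u v : V} (p : X.Walk u v) (i : ℕ) :
    X.dist u (p.getVert i) ≤ i := by
  induction p generalizing i with
  | nil => simp [SimpleGraph.Walk.getVert, SimpleGraph.dist_self]
  | @cons a b c h q ih =>
    cases i with
    | zero => simp [SimpleGraph.Walk.getVert_zero]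
    | succ i =>
      rw [SimpleGraph.Walk.getVert_cons_succ]
      calc X.dist a (q.getVert i) ≤ X.dist a b + X.dist b (q.getVert i) := hconn.dist_triangle
        _ ≤ 1 + i := add_le_add (SimpleGraph.dist_eq_one_iff_adj.2 h).le (ih i)
        _ = i + 1 := by omega

private lemma aux_getVert_dist_le {u v : V} (p : X.Walk u v) (i : ℕ) :
    X.dist (p.getVert i) v ≤ p.length - i := by
  induction p generalizing i with
  | nil => simp [SimpleGraph.Walk.getVert, SimpleGraph.dist_self]
  | @cons a b c h q ih =>
    cases i with
    | zero =>
      simpa using X.dist_le (SimpleGraph.Walk.cons h q)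
    | succ i =>
      rw [SimpleGraph.Walk.getVert_cons_succ]
      simpa [Nat.succ_sub_succ] using ih i

private lemma aux_dist_map (hconn : X.Connected) (e : X ≃g X) (u v : V) :
    X.dist (e u) (e v) = X.dist u v := by
  have key : ∀ (f : X ≃g X) (a b : V), X.dist (f a) (f b) ≤ X.dist a b := by
    intro f a b
    obtain ⟨p, hp⟩ := hconn.exists_walk_length_eq_dist a b
    calc X.dist (f a) (f b) ≤ (p.map f.toHom).length := X.dist_le _
      _ = p.length := by simp
      _ = X.dist a b := hp
  refine le_antisymm (key e u v) ?_
  have h2 := key e⁻¹ (e u) (e v)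
  simpa using h2

private lemma aux_ball_finite (hconn : X.Connected) (hlf : ∀ v : V, (X.neighborSet v).Finite)
    (v0 : V) (k : ℕ) : {w | X.dist v0 w ≤ k}.Finite := by
  induction k with
  | zero =>
    refine (Set.finite_singleton v0).subset ?_
    intro w hw
    simp only [Set.mem_setOf_eq, Nat.le_zero] at hw
    simp [(hconn.dist_eq_zero_iff.1 hw).symm]
  | succ k ih =>
    refine Set.Finite.subset (ih.union (ih.biUnion fun u _ => hlf u)) ?_
    intro w hw
    simp only [Set.mem_setOf_eq] at hw
    by_cases hk : X.dist v0 w ≤ k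
    · exact Or.inl hk
    · have hdw : X.dist v0 w = k + 1 := by omega
      obtain ⟨p, hp⟩ := hconn.exists_walk_length_eq_dist v0 w
      rw [hdw] at hp
      have hpr : p.reverse.length = k + 1 := by simp [hp]
      right
      cases hpq : p.reverse with
      | nil => rw [hpq] at hpr; simp at hpr
      | @cons _ b _ h q =>
        rw [hpq] at hpr
        simp only [SimpleGraph.Walk.length_cons] at hpr
        refine Set.mem_biUnion (show X.dist v0 b ≤ k from ?_) h.symm
        calc X.dist v0 b ≤ q.reverse.length := X.dist_le q.reverse
          _ = k := by
              have := SimpleGraph.Walk.length_reverse q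
              omega

end Aux

/-- Lemma 2.2 ("fi norm") of the paper, in its combinatorial form: if a subgroup `G`
of the automorphism group of a connected, locally finite simple graph `X` has finitely
many orbits of vertices and finite vertex stabilizers, then `G` has finite index in its
normalizer within `Aut(X)`. -/
theorem finiteIndex_in_normalizer_of_proper_cocompact {V : Type*}
    (X : SimpleGraph V) (hconn : X.Connected)
    (hlf : ∀ v : V, (X.neighborSet v).Finite)
    (G : Subgroup (X ≃g X))
    (horb : ∃ s : Finset V, ∀ v : V, ∃ g ∈ G, g v ∈ s)
    (hstab : ∀ v : V, {g : X ≃g X | g ∈ G ∧ g v = v}.Finite) :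
    (G.subgroupOf (Subgroup.normalizer (G : Set (X ≃g X)))).FiniteIndex := by
  classical
  by_cases hV : Nonempty V
  swap
  · have hsub : Subsingleton (X ≃g X) :=
      ⟨fun a b => RelIso.ext fun x => (hV ⟨x⟩).elim⟩
    have : Subsingleton (↥(Subgroup.normalizer (G : Set (X ≃g X))) ⧸ G.subgroupOf (Subgroup.normalizer (G : Set (X ≃g X)))) := by
      constructor
      intro a b
      obtain ⟨a, rfl⟩ := QuotientGroup.mk_surjective a
      obtain ⟨b, rfl⟩ := QuotientGroup.mk_surjective b
      congr 1
      exact Subtype.ext (Subsingleton.elim _ _)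
    haveI : Finite (↥(Subgroup.normalizer (G : Set (X ≃g X))) ⧸ G.subgroupOf (Subgroup.normalizer (G : Set (X ≃g X)))) := Finite.of_subsingleton
    exact Subgroup.finiteIndex_of_finite_quotient
  obtain ⟨v0⟩ := hV
  obtain ⟨s, hs⟩ := horb
  set R := s.sup (X.dist v0) with hRdef
  have hR : ∀ w ∈ s, X.dist v0 w ≤ R := fun w hw => Finset.le_sup hw
  -- the witness function for nontrivial automorphisms
  have hwitex : ∀ f : X ≃g X, f ≠ 1 → ∃ x, f x ≠ x := by
    intro f hf
    by_contra hc
    push_neg at hc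
    exact hf (RelIso.ext fun x => hc x)
  set wit : (X ≃g X) → V := fun f => if h : ∃ x, f x ≠ x then h.choose else v0 with hwitdef
  have hwit : ∀ f : X ≃g X, f ≠ 1 → f (wit f) ≠ wit f := by
    intro f hf
    have h : ∃ x, f x ≠ x := hwitex f hf
    simp only [hwitdef, dif_pos h]
    exact h.choose_spec
  -- a bound beyond which fixing a ball forces triviality of stabilizer elements
  obtain ⟨M0, hM0⟩ : ∃ M0 : ℕ, ∀ f ∈ {g : X ≃g X | g ∈ G ∧ g v0 = v0}, X.dist v0 (wit f) ≤ M0 := by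
    obtain ⟨M0, hM0⟩ := ((hstab v0).image fun f => X.dist v0 (wit f)).bddAbove
    exact ⟨M0, fun f hf => hM0 (Set.mem_image_of_mem _ hf)⟩
  have hM0' : ∀ f : X ≃g X, f ∈ G → f v0 = v0 → (∀ x, X.dist v0 x ≤ M0 → f x = x) → f = 1 := by
    intro f hfG hfv hfix
    by_contra hne
    exact hwit f hne (hfix _ (hM0 f ⟨hfG, hfv⟩))
  set M := M0 + 2 * (2 * R + 1) with hMdef
  -- base commuting claim
  have base : ∀ c : X ≃g X, c ∈ (Subgroup.normalizer (G : Set (X ≃g X))) → (∀ x, X.dist v0 x ≤ M → c x = x) →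
      ∀ a : X ≃g X, a ∈ G → X.dist v0 (a v0) ≤ 2 * R + 1 → c * a = a * c := by
    intro c hc hcfix a haG haD
    have hcinv : ∀ x, X.dist v0 x ≤ M → c⁻¹ x = x := by
      intro x hx
      have hcx := hcfix x hx
      calc c⁻¹ x = c⁻¹ (c x) := by rw [hcx]
        _ = x := RelIso.inv_apply_self c x
    set f := a⁻¹ * (c * a * c⁻¹) with hfdef
    have hfG : f ∈ G :=
      G.mul_mem (G.inv_mem haG) ((Subgroup.mem_normalizer_iff.mp hc a).mp haG)
    have hfv0 : f v0 = v0 := by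
      show (a⁻¹ * (c * a * c⁻¹)) v0 = v0
      simp only [RelIso.mul_apply]
      rw [hcinv v0 (by simp [SimpleGraph.dist_self]), hcfix (a v0) (le_trans haD (by omega))]
      exact RelIso.inv_apply_self a v0
    have hffix : ∀ x, X.dist v0 x ≤ M0 → f x = x := by
      intro x hx
      show (a⁻¹ * (c * a * c⁻¹)) x = x
      simp only [RelIso.mul_apply]
      rw [hcinv x (le_trans hx (by omega))]
      have hax : X.dist v0 (a x) ≤ M := by
        calc X.dist v0 (a x) ≤ X.dist v0 (a v0) + X.dist (a v0) (a x) := hconn.dist_triangle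
          _ = X.dist v0 (a v0) + X.dist v0 x := by rw [aux_dist_map hconn a v0 x]
          _ ≤ (2 * R + 1) + M0 := add_le_add haD hx
          _ ≤ M := by omega
      rw [hcfix _ hax]
      exact RelIso.inv_apply_self a x
    have hf1 : f = 1 := hM0' f hfG hfv0 hffix
    have h2 : a = c * a * c⁻¹ := inv_mul_eq_one.mp hf1
    calc c * a = (c * a * c⁻¹) * c := by group
      _ = a * c := by rw [← h2]
  -- commuting with all of G
  have comm : ∀ c : X ≃g X, c ∈ (Subgroup.normalizer (G : Set (X ≃g X))) → (∀ x, X.dist v0 x ≤ M → c x = x) →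
      ∀ g ∈ G, c * g = g * c := by
    intro c hc hcfix
    suffices h : ∀ n : ℕ, ∀ g ∈ G, X.dist v0 (g v0) ≤ n → c * g = g * c by
      intro g hg
      exact h (X.dist v0 (g v0)) g hg le_rfl
    intro n
    induction n using Nat.strong_induction_on with
    | _ n ih =>
      intro g hg hgn
      by_cases hD : X.dist v0 (g v0) ≤ 2 * R + 1
      · exact base c hc hcfix g hg hD
      · push_neg at hD
        set m := X.dist v0 (g v0) with hmdef
        obtain ⟨p, hp⟩ := hconn.exists_walk_length_eq_dist v0 (g v0)
        set x := p.getVert (m - (R + 1)) with hxdef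
        have hx1 : X.dist v0 x ≤ m - (R + 1) := aux_dist_le_getVert hconn p _
        have hx2 : X.dist x (g v0) ≤ R + 1 := by
          have h := aux_getVert_dist_le p (m - (R + 1))
          rw [hp] at h
          calc X.dist x (g v0) ≤ m - (m - (R + 1)) := h
            _ ≤ R + 1 := by omega
        obtain ⟨gx, hgxG, hgxs⟩ := hs x
        set q := gx⁻¹ with hqdef
        have hq1 : X.dist x (q v0) ≤ R := by
          calc X.dist x (q v0) = X.dist (gx x) (gx (q v0)) := (aux_dist_map hconn gx x (q v0)).symm
            _ = X.dist (gx x) v0 := by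
                congr 1
                exact RelIso.apply_inv_self gx v0
            _ = X.dist v0 (gx x) := SimpleGraph.dist_comm
            _ ≤ R := hR _ hgxs
        have hqv0 : X.dist v0 (q v0) ≤ m - 1 := by
          calc X.dist v0 (q v0) ≤ X.dist v0 x + X.dist x (q v0) := hconn.dist_triangle
            _ ≤ (m - (R + 1)) + R := add_le_add hx1 hq1
            _ ≤ m - 1 := by omega
        have hqG : q ∈ G := G.inv_mem hgxG
        have hcq : c * q = q * c := ih (m - 1) (by omega) q hqG hqv0
        have ha : X.dist v0 ((q⁻¹ * g) v0) ≤ 2 * R + 1 := by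
          have hqq : q ((q⁻¹ * g) v0) = g v0 := by
            exact RelIso.apply_inv_self q (g v0)
          calc X.dist v0 ((q⁻¹ * g) v0)
              = X.dist (q v0) (q ((q⁻¹ * g) v0)) := (aux_dist_map hconn q _ _).symm
            _ = X.dist (q v0) (g v0) := by rw [hqq]
            _ ≤ X.dist (q v0) x + X.dist x (g v0) := hconn.dist_triangle
            _ ≤ R + (R + 1) := add_le_add (by rw [SimpleGraph.dist_comm]; exact hq1) hx2
            _ = 2 * R + 1 := by omega
        have hca : c * (q⁻¹ * g) = (q⁻¹ * g) * c :=
          base c hc hcfix _ (G.mul_mem (G.inv_mem hqG) hg) ha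
        calc c * g = (c * q) * (q⁻¹ * g) := by group
          _ = (q * c) * (q⁻¹ * g) := by rw [hcq]
          _ = q * ((q⁻¹ * g) * c) := by rw [mul_assoc, hca]
          _ = g * c := by group
  -- rigidity: a normalizing element fixing the big ball is trivial
  have rigid : ∀ c : X ≃g X, c ∈ (Subgroup.normalizer (G : Set (X ≃g X))) → (∀ x, X.dist v0 x ≤ M → c x = x) → c = 1 := by
    intro c hc hcfix
    have hcomm := comm c hc hcfix
    refine RelIso.ext fun w => ?_
    show c w = (1 : X ≃g X) w
    obtain ⟨g, hgG, hgs⟩ := hs w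
    have h1 : c (g w) = g w := hcfix _ (le_trans (hR _ hgs) (by omega))
    have h2 : c * g = g * c := hcomm g hgG
    have h3 : c * g⁻¹ = g⁻¹ * c := by
      calc c * g⁻¹ = g⁻¹ * (g * c) * g⁻¹ := by group
        _ = g⁻¹ * (c * g) * g⁻¹ := by rw [h2]
        _ = g⁻¹ * c := by group
    have h4 : g⁻¹ (g w) = w := RelIso.inv_apply_self g w
    calc c w = c (g⁻¹ (g w)) := by rw [h4]
      _ = (c * g⁻¹) (g w) := rfl
      _ = (g⁻¹ * c) (g w) := by rw [h3]
      _ = g⁻¹ (c (g w)) := rfl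
      _ = g⁻¹ (g w) := by rw [h1]
      _ = (1 : X ≃g X) w := h4
  -- finiteness of the stabilizer of v0 in the normalizer
  have hstabN : {n : X ≃g X | n ∈ (Subgroup.normalizer (G : Set (X ≃g X))) ∧ n v0 = v0}.Finite := by
    set B := {w | X.dist v0 w ≤ M} with hBdef
    have hB : B.Finite := aux_ball_finite hconn hlf v0 M
    have hBf : Finite ↥B := hB.to_subtype
    set Φ : ↥{n : X ≃g X | n ∈ (Subgroup.normalizer (G : Set (X ≃g X))) ∧ n v0 = v0} → (↥B → ↥B) := fun n x =>
      ⟨(n : X ≃g X) x, by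
        have h1 : X.dist ((n : X ≃g X) v0) ((n : X ≃g X) (x : V)) = X.dist v0 (x : V) :=
          aux_dist_map hconn _ _ _
        rw [n.2.2] at h1
        show X.dist v0 ((n : X ≃g X) (x : V)) ≤ M
        rw [h1]
        exact x.2⟩ with hΦdef
    have hinj : Function.Injective Φ := by
      intro n n' h
      have hfix : ∀ y, X.dist v0 y ≤ M → ((n' : X ≃g X)⁻¹ * (n : X ≃g X)) y = y := by
        intro y hy
        have := congrFun h ⟨y, hy⟩
        have heq : (n : X ≃g X) y = (n' : X ≃g X) y := congrArg Subtype.val this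
        show (n' : X ≃g X)⁻¹ ((n : X ≃g X) y) = y
        rw [heq]
        exact RelIso.inv_apply_self _ _
      have hmem : ((n' : X ≃g X)⁻¹ * (n : X ≃g X)) ∈ (Subgroup.normalizer (G : Set (X ≃g X))) :=
        (Subgroup.normalizer (G : Set (X ≃g X))).mul_mem ((Subgroup.normalizer (G : Set (X ≃g X))).inv_mem n'.2.1) n.2.1
      have := rigid _ hmem hfix
      have : (n : X ≃g X) = (n' : X ≃g X) := (inv_mul_eq_one.mp this).symm
      exact Subtype.ext this
    have : Finite ↥{n : X ≃g X | n ∈ (Subgroup.normalizer (G : Set (X ≃g X))) ∧ n v0 = v0} := Finite.of_injective Φ hinj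
    exact Set.finite_coe_iff.mp this
  -- finiteness of the transversal set
  have hT : {n : X ≃g X | n ∈ (Subgroup.normalizer (G : Set (X ≃g X))) ∧ n v0 ∈ s}.Finite := by
    have hsub : {n : X ≃g X | n ∈ (Subgroup.normalizer (G : Set (X ≃g X))) ∧ n v0 ∈ s} ⊆
        ⋃ w ∈ (s : Set V), {n : X ≃g X | n ∈ (Subgroup.normalizer (G : Set (X ≃g X))) ∧ n v0 = w} := by
      intro n hn
      exact Set.mem_biUnion hn.2 ⟨hn.1, rfl⟩
    refine Set.Finite.subset (Set.Finite.biUnion s.finite_toSet fun w _ => ?_) hsub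
    by_cases hne : ∃ n0 : X ≃g X, n0 ∈ (Subgroup.normalizer (G : Set (X ≃g X))) ∧ n0 v0 = w
    · obtain ⟨n0, hn0N, hn0w⟩ := hne
      have hsub2 : {n : X ≃g X | n ∈ (Subgroup.normalizer (G : Set (X ≃g X))) ∧ n v0 = w} ⊆
          (fun k => n0 * k) '' {n : X ≃g X | n ∈ (Subgroup.normalizer (G : Set (X ≃g X))) ∧ n v0 = v0} := by
        intro n hn
        refine ⟨n0⁻¹ * n, ⟨(Subgroup.normalizer (G : Set (X ≃g X))).mul_mem ((Subgroup.normalizer (G : Set (X ≃g X))).inv_mem hn0N) hn.1, ?_⟩, by group⟩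
        show n0⁻¹ (n v0) = v0
        rw [hn.2, ← hn0w]
        exact RelIso.inv_apply_self n0 v0
      exact Set.Finite.subset (hstabN.image _) hsub2
    · have : {n : X ≃g X | n ∈ (Subgroup.normalizer (G : Set (X ≃g X))) ∧ n v0 = w} = ∅ := by
        ext n
        simp only [Set.mem_setOf_eq, Set.mem_empty_iff_false, iff_false]
        intro hn
        exact hne ⟨n, hn⟩
      rw [this]
      exact Set.finite_empty
  -- the quotient is finite
  have hTf : Finite ↥{n : X ≃g X | n ∈ (Subgroup.normalizer (G : Set (X ≃g X))) ∧ n v0 ∈ s} := hT.to_subtype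
  haveI hQ : Finite (↥(Subgroup.normalizer (G : Set (X ≃g X))) ⧸ G.subgroupOf (Subgroup.normalizer (G : Set (X ≃g X)))) := by
    refine Finite.of_surjective
      (fun t : ↥{n : X ≃g X | n ∈ (Subgroup.normalizer (G : Set (X ≃g X))) ∧ n v0 ∈ s} =>
        (QuotientGroup.mk ⟨(t : X ≃g X), t.2.1⟩ : ↥(Subgroup.normalizer (G : Set (X ≃g X))) ⧸ G.subgroupOf (Subgroup.normalizer (G : Set (X ≃g X))))) ?_
    intro qq
    obtain ⟨n, rfl⟩ := QuotientGroup.mk_surjective qq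
    obtain ⟨g, hgG, hgs⟩ := hs ((n : X ≃g X) v0)
    have hgN : g ∈ (Subgroup.normalizer (G : Set (X ≃g X))) := Subgroup.le_normalizer hgG
    refine ⟨⟨g * (n : X ≃g X), ⟨(Subgroup.normalizer (G : Set (X ≃g X))).mul_mem hgN n.2, ?_⟩⟩, ?_⟩
    · show g ((n : X ≃g X) v0) ∈ s
      exact hgs
    · refine (QuotientGroup.eq).mpr ?_
      rw [Subgroup.mem_subgroupOf]
      show (g * (n : X ≃g X))⁻¹ * (n : X ≃g X) ∈ G
      have hninv : (n : X ≃g X)⁻¹ ∈ (Subgroup.normalizer (G : Set (X ≃g X))) := (Subgroup.normalizer (G : Set (X ≃g X))).inv_mem n.2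
      have := (Subgroup.mem_normalizer_iff.mp hninv g⁻¹).mp (G.inv_mem hgG)
      simpa [mul_assoc] using this
  exact Subgroup.finiteIndex_of_finite_quotient
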